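/- Let ω = (ω₁, ω₂) ∈ ℝ² with ω ≠ 0, set ω⊥ = (ω₂, −ω₁), and let s₁, s₂ > 1/2 satisfy 1/s₁ + 1/s₂ < 2. Then Σ_{n∈ℤ²} 1/(1 + |ω·n|^{2s₁} + |ω⊥·n|^{2s₂}) < ∞. -/

import Mathlib

section AuxAnisotropic

private lemma auxA_sum_nat {p : ℝ} (hp : 1 < p) :
    Summable (fun n : ℕ => (1 + |(n : ℝ)|) ^ (-p)) := by
  have h := (Real.summable_nat_rpow_inv.2 hp)
  have h2 : Summable (fun n : ℕ => (((n + 1 : ℕ) : ℝ) ^ p)⁻¹) :=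
    h.comp_injective Nat.succ_injective
  refine h2.congr fun n => ?_
  rw [abs_of_nonneg (Nat.cast_nonneg n), Real.rpow_neg (by positivity)]
  push_cast
  ring_nf

private lemma auxA_sum_int {p : ℝ} (hp : 1 < p) :
    Summable (fun m : ℤ => (1 + |(m : ℝ)|) ^ (-p)) := by
  refine Summable.of_nat_of_neg ?_ ?_ <;>
    · refine (auxA_sum_nat hp).congr fun n => ?_
      push_cast
      simp [abs_neg]

private lemma auxA_sum_int' {p : ℝ} (hp : 1 < p) :
    Summable (fun m : ℤ => ((1 + |(m : ℝ)|) / 4) ^ (-p)) := by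
  refine ((auxA_sum_int hp).mul_left ((4:ℝ) ^ p)).congr fun m => ?_
  rw [Real.div_rpow (by positivity) (by norm_num), Real.rpow_neg (by norm_num : (0:ℝ) ≤ 4)]
  field_simp

private lemma auxA_comp {α β : Type*} [DecidableEq β] {g : β → ℝ} (hg0 : ∀ b, 0 ≤ g b)
    (hg : Summable g) (F : α → β) (K : ℕ)
    (hK : ∀ (s : Finset α) (b : β), (s.filter (fun a => F a = b)).card ≤ K) :
    Summable (fun a => g (F a)) := by
  apply summable_of_sum_le (c := (K : ℝ) * ∑' b, g b)
  · intro a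
    exact hg0 _
  · intro u
    rw [Finset.sum_comp]
    have h1 : ∀ b ∈ u.image F,
        (u.filter (fun a => F a = b)).card • g b ≤ (K : ℝ) * g b := by
      intro b _
      rw [nsmul_eq_mul]
      exact mul_le_mul_of_nonneg_right (by exact_mod_cast hK u b) (hg0 b)
    calc ∑ b ∈ u.image F, (u.filter (fun a => F a = b)).card • g b
        ≤ ∑ b ∈ u.image F, (K : ℝ) * g b := Finset.sum_le_sum h1
      _ = (K : ℝ) * ∑ b ∈ u.image F, g b := by rw [Finset.mul_sum]
      _ ≤ (K : ℝ) * ∑' b, g b := by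
          apply mul_le_mul_of_nonneg_left _ (Nat.cast_nonneg K)
          exact Summable.sum_le_tsum _ (fun b _ => hg0 b) hg

private noncomputable def auxF (ω : ℝ × ℝ) (n : ℤ × ℤ) : ℤ × ℤ :=
  (⌊ω.1 * (n.1 : ℝ) + ω.2 * (n.2 : ℝ)⌋, ⌊ω.2 * (n.1 : ℝ) - ω.1 * (n.2 : ℝ)⌋)

private noncomputable def auxG (p q : ℝ) (m : ℤ × ℤ) : ℝ :=
  ((1 + |(m.1 : ℝ)|) / 4) ^ (-p) * ((1 + |(m.2 : ℝ)|) / 4) ^ (-q)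

private lemma auxA_fiber (ω : ℝ × ℝ) (hW : 0 < ω.1 ^ 2 + ω.2 ^ 2) :
    ∃ K : ℕ, ∀ (s : Finset (ℤ × ℤ)) (b : ℤ × ℤ),
      (s.filter (fun n => auxF ω n = b)).card ≤ K := by
  simp only [auxF]
  set W := ω.1 ^ 2 + ω.2 ^ 2 with hWdef
  set M : ℕ := ⌈Real.sqrt (2 / W)⌉₊ with hM
  refine ⟨(2 * M + 1) * (2 * M + 1), fun s b => ?_⟩
  set t := s.filter (fun n : ℤ × ℤ => ((⌊ω.1 * (n.1 : ℝ) + ω.2 * (n.2 : ℝ)⌋,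
        ⌊ω.2 * (n.1 : ℝ) - ω.1 * (n.2 : ℝ)⌋) : ℤ × ℤ) = b) with ht
  rcases t.eq_empty_or_nonempty with h | ⟨n₀, hn₀⟩
  · have h0 : t.card = 0 := by simp [h]
    refine le_of_eq_of_le ?_ (Nat.zero_le _)
    convert h0
    ext x; simp [t]
    exact Finset.mem_filter
  · have key : ∀ n ∈ t, |n.1 - n₀.1| ≤ (M : ℤ) ∧ |n.2 - n₀.2| ≤ (M : ℤ) := by
      intro n hn
      have hn' := Finset.mem_filter.1 hn
      have hn₀' := Finset.mem_filter.1 hn₀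
      set a1 := ω.1 * (n.1 : ℝ) + ω.2 * (n.2 : ℝ)
      set b1 := ω.2 * (n.1 : ℝ) - ω.1 * (n.2 : ℝ)
      set a0 := ω.1 * (n₀.1 : ℝ) + ω.2 * (n₀.2 : ℝ)
      set b0 := ω.2 * (n₀.1 : ℝ) - ω.1 * (n₀.2 : ℝ)
      have hfa : ⌊a1⌋ = ⌊a0⌋ := by
        have h1 : (⌊a1⌋, ⌊b1⌋) = b := hn'.2
        have h2 : (⌊a0⌋, ⌊b0⌋) = b := hn₀'.2
        rw [← h2] at h1; exact (Prod.ext_iff.1 h1).1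
      have hfb : ⌊b1⌋ = ⌊b0⌋ := by
        have h1 : (⌊a1⌋, ⌊b1⌋) = b := hn'.2
        have h2 : (⌊a0⌋, ⌊b0⌋) = b := hn₀'.2
        rw [← h2] at h1; exact (Prod.ext_iff.1 h1).2
      have hda : |a1 - a0| < 1 := by
        have l1 := Int.floor_le a1
        have l2 := Int.lt_floor_add_one a1
        have l3 := Int.floor_le a0
        have l4 := Int.lt_floor_add_one a0
        rw [hfa] at l1 l2
        rw [abs_lt]; constructor <;> linarith
      have hdb : |b1 - b0| < 1 := by
        have l1 := Int.floor_le b1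
        have l2 := Int.lt_floor_add_one b1
        have l3 := Int.floor_le b0
        have l4 := Int.lt_floor_add_one b0
        rw [hfb] at l1 l2
        rw [abs_lt]; constructor <;> linarith
      set d1 : ℝ := (n.1 : ℝ) - (n₀.1 : ℝ)
      set d2 : ℝ := (n.2 : ℝ) - (n₀.2 : ℝ)
      have hiden : (a1 - a0) ^ 2 + (b1 - b0) ^ 2 = W * (d1 ^ 2 + d2 ^ 2) := by
        simp only [a1, b1, a0, b0, d1, d2, hWdef]; ring
      have h2 : W * (d1 ^ 2 + d2 ^ 2) < 2 := by
        rw [← hiden]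
        nlinarith [abs_nonneg (a1 - a0), abs_nonneg (b1 - b0), sq_abs (a1 - a0), sq_abs (b1 - b0)]
      have hlt : d1 ^ 2 + d2 ^ 2 < 2 / W := by
        rw [lt_div_iff₀ hW]; linarith [mul_comm (d1 ^ 2 + d2 ^ 2) W]
      have hMsq : 2 / W ≤ (M : ℝ) ^ 2 := by
        have h1 : Real.sqrt (2 / W) ≤ (M : ℝ) := Nat.le_ceil _
        have h2 : (0:ℝ) ≤ 2 / W := by positivity
        nlinarith [Real.sq_sqrt h2, Real.sqrt_nonneg (2 / W)]
      clear_value W M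
      have hd1 : |d1| ≤ (M : ℝ) := by
        have h3 : d1 ^ 2 ≤ (M : ℝ) ^ 2 :=
          le_trans (le_of_lt (lt_of_le_of_lt (le_add_of_nonneg_right (sq_nonneg d2)) hlt)) hMsq
        calc |d1| = Real.sqrt (d1 ^ 2) := (Real.sqrt_sq_eq_abs d1).symm
          _ ≤ Real.sqrt ((M : ℝ) ^ 2) := Real.sqrt_le_sqrt h3
          _ = (M : ℝ) := Real.sqrt_sq (Nat.cast_nonneg M)
      have hd2 : |d2| ≤ (M : ℝ) := by
        have h3 : d2 ^ 2 ≤ (M : ℝ) ^ 2 :=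
          le_trans (le_of_lt (lt_of_le_of_lt (le_add_of_nonneg_left (sq_nonneg d1)) hlt)) hMsq
        calc |d2| = Real.sqrt (d2 ^ 2) := (Real.sqrt_sq_eq_abs d2).symm
          _ ≤ Real.sqrt ((M : ℝ) ^ 2) := Real.sqrt_le_sqrt h3
          _ = (M : ℝ) := Real.sqrt_sq (Nat.cast_nonneg M)
      constructor
      · have : |((n.1 - n₀.1 : ℤ) : ℝ)| ≤ ((M : ℤ) : ℝ) := by push_cast; convert hd1 using 2
        rw [← Int.cast_abs] at this
        exact_mod_cast this
      · have : |((n.2 - n₀.2 : ℤ) : ℝ)| ≤ ((M : ℤ) : ℝ) := by push_cast; convert hd2 using 2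
        rw [← Int.cast_abs] at this
        exact_mod_cast this
    have hsub : t ⊆ Finset.Icc (n₀ - ((M : ℤ), (M : ℤ))) (n₀ + ((M : ℤ), (M : ℤ))) := by
      intro n hn
      obtain ⟨h1, h2⟩ := key n hn
      rw [abs_le] at h1 h2
      rw [Finset.mem_Icc]
      constructor <;> rw [Prod.le_def] <;> constructor <;>
        simp [Prod.fst_sub, Prod.snd_sub] <;> omega
    calc t.card ≤ _ := Finset.card_le_card hsub
      _ ≤ (2 * M + 1) * (2 * M + 1) := by
          rw [Finset.card_Icc_prod]
          simp only [Prod.fst_sub, Prod.fst_add, Prod.snd_sub, Prod.snd_add, Int.card_Icc]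
          apply Nat.mul_le_mul <;> omega

private lemma auxA_pow_bound {x r : ℝ} (hx : 0 ≤ x) (hr : 1 ≤ r) :
    ((1 + x) / 2) ^ r ≤ 1 + x ^ r := by
  rcases le_total x 1 with h | h
  · have h1 : ((1 + x) / 2 : ℝ) ^ r ≤ 1 :=
      Real.rpow_le_one (by linarith) (by linarith) (by linarith)
    have h2 : (0:ℝ) ≤ x ^ r := Real.rpow_nonneg hx r
    linarith
  · have h1 : ((1 + x) / 2 : ℝ) ≤ x := by linarith
    have h2 : ((1 + x) / 2 : ℝ) ^ r ≤ x ^ r :=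
      Real.rpow_le_rpow (by linarith) h1 (by linarith)
    have h3 : (0:ℝ) ≤ x ^ r := Real.rpow_nonneg hx r
    linarith

private lemma auxA_floor_abs (a : ℝ) : |((⌊a⌋ : ℤ) : ℝ)| ≤ |a| + 1 := by
  have h1 := Int.floor_le a
  have h2 := Int.lt_floor_add_one a
  rw [abs_le]
  constructor
  · linarith [neg_abs_le a]
  · linarith [le_abs_self a]

end AuxAnisotropic

/-- summability of the anisotropic weight over the integer lattice:
for `ω ≠ 0`, `ω⊥ = (ω₂, −ω₁)`, `s₁, s₂ > 1/2` with `1/s₁ + 1/s₂ < 2`,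
`Σ_{n∈ℤ²} 1/(1 + |ω·n|^{2s₁} + |ω⊥·n|^{2s₂}) < ∞`. -/
theorem stmt_3 (ω : ℝ × ℝ) (hω : ω ≠ 0) (s₁ s₂ : ℝ)
    (hs₁ : 1 / 2 < s₁) (hs₂ : 1 / 2 < s₂) (hsum : 1 / s₁ + 1 / s₂ < 2) :
    Summable (fun n : ℤ × ℤ =>
      1 / (1 + |ω.1 * (n.1 : ℝ) + ω.2 * (n.2 : ℝ)| ^ (2 * s₁)
             + |ω.2 * (n.1 : ℝ) - ω.1 * (n.2 : ℝ)| ^ (2 * s₂))) := by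
  -- positivity of |ω|²
  have hW : 0 < ω.1 ^ 2 + ω.2 ^ 2 := by
    have h : ω.1 ≠ 0 ∨ ω.2 ≠ 0 := by
      by_contra h; push_neg at h; exact hω (Prod.ext h.1 h.2)
    rcases h with h | h
    · positivity
    · positivity
  have hs₁0 : 0 < s₁ := by linarith
  have hs₂0 : 0 < s₂ := by linarith
  have hu : 0 < 1 / s₁ := by positivity
  have hv : 0 < 1 / s₂ := by positivity
  -- choice of θ
  obtain ⟨θ, hθ1, hθ2⟩ : ∃ θ : ℝ, 1 / s₁ / 2 < θ ∧ θ < 1 - 1 / s₂ / 2 :=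
    ⟨(1 / s₁ / 2 + 1 - 1 / s₂ / 2) / 2, by linarith, by linarith⟩
  have hθ0 : 0 < θ := by linarith
  have hθlt1 : θ < 1 := by linarith
  set p : ℝ := 2 * s₁ * θ with hpdef
  set q : ℝ := 2 * s₂ * (1 - θ) with hqdef
  have hp : 1 < p := by
    have e : (1 / s₁ / 2) * (2 * s₁) = 1 := by field_simp
    have := mul_lt_mul_of_pos_right hθ1 (by positivity : (0:ℝ) < 2 * s₁)
    rw [e] at this
    rw [hpdef]; linarith [this]
  have hq : 1 < q := by
    have e : (1 / s₂ / 2) * (2 * s₂) = 1 := by field_simp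
    have h1 : 1 / s₂ / 2 < 1 - θ := by linarith
    have := mul_lt_mul_of_pos_right h1 (by positivity : (0:ℝ) < 2 * s₂)
    rw [e] at this
    rw [hqdef]; linarith [this]
  have hp0 : 0 ≤ p := by positivity
  have hq0 : 0 ≤ q := by
    rw [hqdef]; nlinarith
  -- the grouping map and the dominating function
  have hg0 : ∀ m, 0 ≤ auxG p q m := by
    intro m
    exact mul_nonneg (Real.rpow_nonneg (by positivity) _) (Real.rpow_nonneg (by positivity) _)
  have hgsum : Summable (auxG p q) := by
    refine ((auxA_sum_int' hp).mul_of_nonneg (auxA_sum_int' hq)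
      (fun m => Real.rpow_nonneg (by positivity) _)
      (fun m => Real.rpow_nonneg (by positivity) _)).congr fun m => ?_
    rfl
  obtain ⟨K, hK⟩ := auxA_fiber ω hW
  have hcomp : Summable (fun n => auxG p q (auxF ω n)) := auxA_comp hg0 hgsum (auxF ω) K hK
  -- pointwise comparison
  refine Summable.of_nonneg_of_le (fun n => ?_) (fun n => ?_) hcomp
  · positivity
  · set a : ℝ := ω.1 * (n.1 : ℝ) + ω.2 * (n.2 : ℝ) with ha
    set b : ℝ := ω.2 * (n.1 : ℝ) - ω.1 * (n.2 : ℝ) with hb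
    set X : ℝ := |a| ^ (2 * s₁) with hX
    set Y : ℝ := |b| ^ (2 * s₂) with hY
    have hX0 : 0 ≤ X := Real.rpow_nonneg (abs_nonneg a) _
    have hY0 : 0 ≤ Y := Real.rpow_nonneg (abs_nonneg b) _
    have hD : (0:ℝ) < 1 + X + Y := by linarith
    set A : ℝ := ((1 + |((⌊a⌋ : ℤ) : ℝ)|) / 4) ^ p with hA
    set B : ℝ := ((1 + |((⌊b⌋ : ℤ) : ℝ)|) / 4) ^ q with hB
    have hApos : 0 < A := Real.rpow_pos_of_pos (by positivity) _
    have hBpos : 0 < B := Real.rpow_pos_of_pos (by positivity) _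
    -- A ≤ (1 + X)^θ
    have hAle : A ≤ (1 + X) ^ θ := by
      have step1 : (1 + |((⌊a⌋ : ℤ) : ℝ)|) / 4 ≤ (1 + |a|) / 2 := by
        have h0 := auxA_floor_abs a
        have h0' := abs_nonneg a
        linarith [h0, h0']
      have step2 : A ≤ ((1 + |a|) / 2) ^ p :=
        Real.rpow_le_rpow (by positivity) step1 hp0
      have step3 : ((1 + |a|) / 2) ^ p = (((1 + |a|) / 2) ^ (2 * s₁)) ^ θ := by
        rw [← Real.rpow_mul (by positivity)]
      have step4 : (((1 + |a|) / 2) ^ (2 * s₁)) ^ θ ≤ (1 + X) ^ θ := by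
        apply Real.rpow_le_rpow (Real.rpow_nonneg (by positivity) _) _ (le_of_lt hθ0)
        rw [hX]
        exact auxA_pow_bound (abs_nonneg a) (by linarith)
      calc A ≤ ((1 + |a|) / 2) ^ p := step2
        _ = (((1 + |a|) / 2) ^ (2 * s₁)) ^ θ := step3
        _ ≤ (1 + X) ^ θ := step4
    have hBle : B ≤ (1 + Y) ^ (1 - θ) := by
      have step1 : (1 + |((⌊b⌋ : ℤ) : ℝ)|) / 4 ≤ (1 + |b|) / 2 := by
        have h0 := auxA_floor_abs b
        have h0' := abs_nonneg b
        linarith [h0, h0']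
      have step2 : B ≤ ((1 + |b|) / 2) ^ q :=
        Real.rpow_le_rpow (by positivity) step1 hq0
      have step3 : ((1 + |b|) / 2) ^ q = (((1 + |b|) / 2) ^ (2 * s₂)) ^ (1 - θ) := by
        rw [← Real.rpow_mul (by positivity)]
      have step4 : (((1 + |b|) / 2) ^ (2 * s₂)) ^ (1 - θ) ≤ (1 + Y) ^ (1 - θ) := by
        apply Real.rpow_le_rpow (Real.rpow_nonneg (by positivity) _) _ (by linarith)
        rw [hY]
        exact auxA_pow_bound (abs_nonneg b) (by linarith)
      calc B ≤ ((1 + |b|) / 2) ^ q := step2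
        _ = (((1 + |b|) / 2) ^ (2 * s₂)) ^ (1 - θ) := step3
        _ ≤ (1 + Y) ^ (1 - θ) := step4
    -- AM-GM
    have hAMGM : (1 + X) ^ θ * (1 + Y) ^ (1 - θ) ≤ 1 + X + Y := by
      have h1 := Real.geom_mean_le_arith_mean2_weighted (w₁ := θ) (w₂ := 1 - θ)
        (p₁ := 1 + X) (p₂ := 1 + Y) (le_of_lt hθ0) (by linarith)
        (by linarith) (by linarith) (by ring)
      have h2 : θ * (1 + X) + (1 - θ) * (1 + Y) ≤ 1 + X + Y := by nlinarith
      linarith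
    have hABle : A * B ≤ 1 + X + Y := by
      calc A * B ≤ (1 + X) ^ θ * (1 + Y) ^ (1 - θ) :=
            mul_le_mul hAle hBle (le_of_lt hBpos) (Real.rpow_nonneg (by linarith) _)
        _ ≤ 1 + X + Y := hAMGM
    have hfinal : 1 / (1 + X + Y) ≤ auxG p q (auxF ω n) := by
      have h1 : 1 / (1 + X + Y) ≤ 1 / (A * B) :=
        one_div_le_one_div_of_le (mul_pos hApos hBpos) hABle
      have h2 : 1 / (A * B) = auxG p q (auxF ω n) := by
        rw [hA, hB, ha, hb]
        simp only [auxG, auxF]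
        rw [Real.rpow_neg (by positivity), Real.rpow_neg (by positivity), one_div, mul_inv]
      rw [← h2]; exact h1
    exact hfinal
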